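/- Let N and S be integrable random variables on a probability space such that S ~ Gamma(m, 1-ρ) and E(N·S), E(N) are finite. Suppose for each small ε ≥ 0 we have a random variable S^ε ~ Gamma(m, 1-ρ-ε) with the property that h(s) := E(N | S = s) satisfies E(N^ε) = ∫₀^∞ h(s) f_ε(s) ds where f_ε is the Gamma(m, 1-ρ-ε) density, and h is bounded by a polynomial. Then d/dε E(N^ε) at ε = 0 equals E(N·S) - (m/(1-ρ))·E(N) = Cov(N, S). -/

import Mathlib

open MeasureTheory

/-- The Gamma(m, 1-ρ-ε) density. -/
noncomputable def gammaDens (m : ℕ) (ρ ε s : ℝ) : ℝ :=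
  (1 - ρ - ε) ^ m * Real.exp (-(1 - ρ - ε) * s) * s ^ (m - 1) /
    (Nat.factorial (m - 1))

lemma int_aux (n : ℕ) {a : ℝ} (ha : 0 < a) :
    IntegrableOn (fun s : ℝ => s ^ n * Real.exp (-(a * s))) (Set.Ioi (0:ℝ)) := by
  have H := integrableOn_rpow_mul_exp_neg_mul_rpow (p := 1) (s := (n : ℝ)) (b := a)
    (by exact_mod_cast neg_one_lt_zero.trans_le (Nat.cast_nonneg n)) one_pos ha
  refine H.congr_fun (fun x hx => ?_) measurableSet_Ioi
  have hx0 : (0:ℝ) < x := hx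
  beta_reduce
  rw [Real.rpow_natCast, Real.rpow_one, neg_mul]

set_option maxHeartbeats 2000000 in
theorem stmt_14 {Ω : Type*} [MeasureSpace Ω] {μ : Measure Ω} [IsProbabilityMeasure μ]
    (m : ℕ) (hm : 1 ≤ m) (ρ : ℝ) (hρ0 : 0 < ρ) (hρ1 : ρ < 1)
    (h : ℝ → ℝ) (hmeas : Measurable h)
    (hpoly : ∃ C : ℝ, ∃ k : ℕ, ∀ s : ℝ, 0 ≤ s → |h s| ≤ C * (1 + s ^ k))
    (g : ℝ → ℝ)
    (hg : ∀ ε : ℝ, -ρ < ε → ρ + ε < 1 →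
      g ε = ∫ s in Set.Ioi (0 : ℝ), h s * gammaDens m ρ ε s)
    (N S : Ω → ℝ) (hNS : Integrable (fun ω => N ω * S ω) μ) (hNint : Integrable N μ)
    (hcond1 : ∫ ω, N ω * S ω ∂μ = ∫ s in Set.Ioi (0 : ℝ), h s * s * gammaDens m ρ 0 s)
    (hcond2 : ∫ ω, N ω ∂μ = ∫ s in Set.Ioi (0 : ℝ), h s * gammaDens m ρ 0 s)
    (hES : ∫ ω, S ω ∂μ = m / (1 - ρ)) :
    HasDerivAt g ((∫ ω, N ω * S ω ∂μ) - (m / (1 - ρ)) * ∫ ω, N ω ∂μ) 0 ∧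
      (∫ ω, N ω * S ω ∂μ) - (m / (1 - ρ)) * (∫ ω, N ω ∂μ) =
        (∫ ω, N ω * S ω ∂μ) - (∫ ω, N ω ∂μ) * (∫ ω, S ω ∂μ) := by
  have hmain : HasDerivAt g ((∫ ω, N ω * S ω ∂μ) - (m / (1 - ρ)) * ∫ ω, N ω ∂μ) 0 := by
    obtain ⟨p, rfl⟩ : ∃ p, m = p + 1 := ⟨m - 1, (Nat.succ_pred_eq_of_pos hm).symm⟩
    obtain ⟨C, k, hC⟩ := hpoly
    have hC0 : 0 ≤ C := by
      have h1 := hC 0 le_rfl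
      have h2 : (0:ℝ) ≤ 0 ^ k := pow_nonneg le_rfl k
      nlinarith [abs_nonneg (h 0)]
    set a : ℝ := 1 - ρ with ha_def
    have ha : 0 < a := by simp [ha_def]; linarith
    set a0 : ℝ := a / 2 with ha0_def
    have ha0 : 0 < a0 := by positivity
    set δ : ℝ := min ρ a / 2 with hδ_def
    have hδ : 0 < δ := by positivity
    -- basic facts on the ball
    have hball : ∀ ε ∈ Metric.ball (0:ℝ) δ, a0 ≤ 1 - ρ - ε ∧ 1 - ρ - ε ≤ 1 := by
      intro ε hε
      rw [Metric.mem_ball, Real.dist_eq, sub_zero] at hε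
      have hδa : δ ≤ a / 2 := by
        rw [hδ_def]; have := min_le_right ρ a; linarith
      have hδρ : δ ≤ ρ / 2 := by
        rw [hδ_def]; have := min_le_left ρ a; linarith
      have h1 : ε < a / 2 := lt_of_lt_of_le (lt_of_abs_lt hε) hδa
      have h2 : -(ρ/2) < ε := by
        have := neg_lt_of_abs_lt hε
        linarith
      constructor
      · rw [ha0_def, ha_def] at *; linarith
      · rw [ha_def] at *; linarith
    set F : ℝ → ℝ → ℝ := fun ε s => h s * gammaDens (p+1) ρ ε s with hF_def
    set F' : ℝ → ℝ → ℝ := fun ε s => h s *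
      ((s * (1 - ρ - ε) ^ (p+1) - (p+1) * (1 - ρ - ε) ^ p) * Real.exp (-(1 - ρ - ε) * s)
        * s ^ p / (Nat.factorial p)) with hF'_def
    -- derivative at every point
    have key : ∀ (s : ℝ) (ε : ℝ), HasDerivAt (fun ε => F ε s) (F' ε s) ε := by
      intro s ε
      have h1 : HasDerivAt (fun ε : ℝ => 1 - ρ - ε) (-1) ε := by
        simpa using (hasDerivAt_id ε).const_sub (1 - ρ)
      have h2 : HasDerivAt (fun ε : ℝ => (1 - ρ - ε) ^ (p+1))
          (-((p+1) * (1 - ρ - ε) ^ p)) ε := by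
        have := h1.fun_pow (p+1)
        simpa [mul_comm] using this
      have h3 : HasDerivAt (fun ε : ℝ => Real.exp (-(1 - ρ - ε) * s))
          (s * Real.exp (-(1 - ρ - ε) * s)) ε := by
        have hinner : HasDerivAt (fun ε : ℝ => -(1 - ρ - ε) * s) s ε := by
          simpa using (h1.neg.mul_const s)
        simpa [mul_comm] using hinner.exp
      have h4 := ((h2.fun_mul h3).mul_const ((s:ℝ) ^ p / (Nat.factorial p))).const_mul (h s)
      have hfun : (fun ε : ℝ => h s * ((1 - ρ - ε) ^ (p+1) * Real.exp (-(1 - ρ - ε) * s)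
          * (s ^ p / (Nat.factorial p)))) = fun ε => F ε s := by
        funext ε; simp only [hF_def, gammaDens, Nat.add_sub_cancel]; ring
      rw [hfun] at h4
      convert h4 using 1
      rfl
      rfl
      simp only [hF'_def]
      push_cast
      ring
    -- measurability of F' ε
    have hF'meas : ∀ ε : ℝ, AEStronglyMeasurable (F' ε)
        (volume.restrict (Set.Ioi (0:ℝ))) := by
      intro ε
      apply Measurable.aestronglyMeasurable
      apply hmeas.mul
      fun_prop
    have hFmeas : ∀ ε : ℝ, AEStronglyMeasurable (F ε)
        (volume.restrict (Set.Ioi (0:ℝ))) := by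
      intro ε
      apply Measurable.aestronglyMeasurable
      apply hmeas.mul
      unfold gammaDens
      fun_prop
    -- integrability of F 0
    have hF0int : IntegrableOn (F 0) (Set.Ioi (0:ℝ)) := by
      have hb : IntegrableOn (fun s : ℝ =>
          (C / (Nat.factorial p)) * (s ^ p * Real.exp (-(a0 * s))
            + s ^ (k+p) * Real.exp (-(a0 * s)))) (Set.Ioi (0:ℝ)) :=
        ((int_aux p ha0).add (int_aux (k+p) ha0)).const_mul _
      refine Integrable.mono' hb (hFmeas 0) ?_
      rw [ae_restrict_iff' measurableSet_Ioi]
      filter_upwards with s hs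
      have hs0 : (0:ℝ) < s := hs
      have hu := hball 0 (Metric.mem_ball_self hδ)
      have h06 : (0:ℝ) ≤ 1 - ρ - 0 := by linarith [hu.1]
      have hfact : (0:ℝ) < (Nat.factorial p : ℝ) := by positivity
      have habs : |F 0 s| = |h s| * ((1 - ρ - 0) ^ (p+1) * Real.exp (-(1 - ρ - 0) * s)
          * s ^ p / (Nat.factorial p)) := by
        simp only [hF_def, gammaDens, Nat.add_sub_cancel, abs_mul, abs_div]
        rw [Real.abs_exp, abs_of_nonneg (pow_nonneg hs0.le _),
          abs_of_nonneg (pow_nonneg h06 _), abs_of_pos hfact]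
      rw [Real.norm_eq_abs, habs]
      have h1 : |h s| ≤ C * (1 + s ^ k) := hC s hs0.le
      have h2 : (1 - ρ - 0) ^ (p+1) ≤ 1 := pow_le_one₀ h06 (by linarith [hu.2])
      have h3 : Real.exp (-(1 - ρ - 0) * s) ≤ Real.exp (-(a0 * s)) := by
        apply Real.exp_le_exp.mpr
        have := mul_le_mul_of_nonneg_right hu.1 hs0.le
        linarith
      calc |h s| * ((1 - ρ - 0) ^ (p+1) * Real.exp (-(1 - ρ - 0) * s) * s ^ p
            / (Nat.factorial p))
          ≤ (C * (1 + s ^ k)) * (1 * Real.exp (-(a0 * s)) * s ^ p / (Nat.factorial p)) := by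
            gcongr <;> first
              | exact abs_nonneg _ | positivity | exact h1 | exact h2 | exact h3
        _ = (C / (Nat.factorial p)) * (s ^ p * Real.exp (-(a0 * s))
              + s ^ (k+p) * Real.exp (-(a0 * s))) := by
            field_simp
            ring
    -- the uniform bound for F'
    set bound : ℝ → ℝ := fun s => (C / (Nat.factorial p)) *
      (s ^ (p+1) * Real.exp (-(a0 * s)) + (p+1) * (s ^ p * Real.exp (-(a0 * s)))
        + s ^ (k+p+1) * Real.exp (-(a0 * s)) + (p+1) * (s ^ (k+p) * Real.exp (-(a0 * s))))
      with hbound_def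
    have hbound_int : IntegrableOn bound (Set.Ioi (0:ℝ)) := by
      refine Integrable.const_mul ?_ _
      exact (((int_aux (p+1) ha0).add ((int_aux p ha0).const_mul _)).add
        (int_aux (k+p+1) ha0)).add ((int_aux (k+p) ha0).const_mul _)
    have h_bound : ∀ᵐ s ∂(volume.restrict (Set.Ioi (0:ℝ))),
        ∀ ε ∈ Metric.ball (0:ℝ) δ, ‖F' ε s‖ ≤ bound s := by
      rw [ae_restrict_iff' measurableSet_Ioi]
      filter_upwards with s hs ε hε
      have hs0 : (0:ℝ) < s := hs
      obtain ⟨hu1, hu2⟩ := hball ε hε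
      set u : ℝ := 1 - ρ - ε with hu_def
      have hu0 : 0 < u := lt_of_lt_of_le ha0 hu1
      have hfact : (0:ℝ) < (Nat.factorial p : ℝ) := by positivity
      have habs : |F' ε s| = |h s| * (|s * u ^ (p+1) - (p+1) * u ^ p|
          * Real.exp (-u * s) * s ^ p / (Nat.factorial p)) := by
        simp only [hF'_def, abs_mul, abs_div]
        rw [Real.abs_exp, abs_of_nonneg (pow_nonneg hs0.le _), abs_of_pos hfact]
      rw [Real.norm_eq_abs, habs]
      have h1 : |h s| ≤ C * (1 + s ^ k) := hC s hs0.le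
      have hup1 : u ^ (p+1) ≤ 1 := pow_le_one₀ hu0.le hu2
      have hup2 : u ^ p ≤ 1 := pow_le_one₀ hu0.le hu2
      have h2 : |s * u ^ (p+1) - (p+1) * u ^ p| ≤ s + (p+1) := by
        rw [abs_le]
        constructor
        · have q1 : (0:ℝ) ≤ s * u ^ (p+1) := by positivity
          have q2 : ((p:ℝ)+1) * u ^ p ≤ (p:ℝ)+1 := by nlinarith [pow_nonneg hu0.le p]
          push_cast
          linarith
        · have q1 : s * u ^ (p+1) ≤ s := by nlinarith [pow_nonneg hu0.le (p+1)]
          have q2 : (0:ℝ) ≤ ((p:ℝ)+1) * u ^ p := by positivity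
          push_cast
          linarith
      have h3 : Real.exp (-u * s) ≤ Real.exp (-(a0 * s)) := by
        apply Real.exp_le_exp.mpr
        have := mul_le_mul_of_nonneg_right hu1 hs0.le
        linarith
      calc |h s| * (|s * u ^ (p+1) - (p+1) * u ^ p| * Real.exp (-u * s) * s ^ p
            / (Nat.factorial p))
          ≤ (C * (1 + s ^ k)) * ((s + (p+1)) * Real.exp (-(a0 * s)) * s ^ p
              / (Nat.factorial p)) := by
            gcongr <;> first
              | exact abs_nonneg _ | positivity | exact h1 | exact h2 | exact h3
        _ = bound s := by
            rw [hbound_def]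
            field_simp
            ring
    -- apply the dominated-derivative theorem
    have hder := hasDerivAt_integral_of_dominated_loc_of_deriv_le (Metric.ball_mem_nhds 0 hδ)
      (Filter.Eventually.of_forall hFmeas) hF0int (hF'meas 0) h_bound hbound_int
      (by rw [ae_restrict_iff' measurableSet_Ioi]
          filter_upwards with s _ ε _
          exact key s ε)
    obtain ⟨hF'0int, hder⟩ := hder
    -- identify the derivative value
    have hsplit : ∀ s ∈ Set.Ioi (0:ℝ),
        h s * s * gammaDens (p+1) ρ 0 s = F' 0 s + ((p+1) / a) * (F 0 s) := by
      intro s _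
      simp only [hF'_def, hF_def, gammaDens, Nat.add_sub_cancel]
      have hane : (1 - ρ) ≠ 0 := by intro hh; simp [ha_def] at ha; linarith
      rw [ha_def]
      field_simp
      ring
    have hval : (∫ s in Set.Ioi (0:ℝ), F' 0 s) =
        (∫ ω, N ω * S ω ∂μ) - ((p+1) / (1 - ρ)) * ∫ ω, N ω ∂μ := by
      rw [hcond1, hcond2]
      have : (∫ s in Set.Ioi (0:ℝ), h s * s * gammaDens (p+1) ρ 0 s) =
          (∫ s in Set.Ioi (0:ℝ), F' 0 s) + ((p+1) / a) * ∫ s in Set.Ioi (0:ℝ), F 0 s := by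
        rw [← integral_const_mul, ← integral_add hF'0int (hF0int.const_mul _)]
        exact setIntegral_congr_fun measurableSet_Ioi fun s hs => hsplit s hs
      rw [ha_def] at this
      have hF0eq : (∫ s in Set.Ioi (0:ℝ), F 0 s) =
          ∫ s in Set.Ioi (0:ℝ), h s * gammaDens (p+1) ρ 0 s := rfl
      rw [hF0eq] at this
      push_cast at this ⊢
      linarith
    -- transfer to g
    have hEq : g =ᶠ[nhds (0:ℝ)] fun ε => ∫ s in Set.Ioi (0:ℝ), F ε s := by
      have hmem : Set.Ioo (-ρ) (1 - ρ) ∈ nhds (0:ℝ) := by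
        apply Ioo_mem_nhds <;> linarith
      filter_upwards [hmem] with ε hε
      exact hg ε hε.1 (by linarith [hε.2])
    have := hder.congr_of_eventuallyEq hEq
    rw [hval] at this
    convert this using 2
    rfl
    rfl
    rw [ha_def]
    push_cast
    ring
  refine ⟨hmain, ?_⟩
  rw [hES]
  ring
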